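/- With the face maps b_i^{n,p} as above, the map d_m^{n,p} = Σ_{i=0}^{n+1} (-1)^i b_i^{n,p} : Y^{n,p}(M,N) → Y^{n+1,p}(M,N) satisfies d_m^{n+1,p} ∘ d_m^{n,p} = 0 for all n, p ≥ 0. -/

import Mathlib

open TensorProduct
noncomputable section

namespace PS

variable (k : Type) [Field k] (A : Type) [Ring A] [Bialgebra k A]

/-- Left-nested tensor powers with base `B`: `pwr B n = B ⊗ A ⊗ ⋯ ⊗ A` (`n` copies of `A`). -/
def pwr (B : ModuleCat k) : ℕ → ModuleCat k
  | 0 => B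
  | n + 1 => ModuleCat.of k (pwr B n ⊗[k] A)

/-- `A^{⊗ n}` realized as `pwr k n`, i.e. `k ⊗ A ⊗ ⋯ ⊗ A`. -/
abbrev Pk (n : ℕ) : ModuleCat k := pwr k A (ModuleCat.of k k) n

abbrev μA : A ⊗[k] A →ₗ[k] A := LinearMap.mul' k A
abbrev ΔA : A →ₗ[k] A ⊗[k] A := Coalgebra.comul
abbrev εA : A →ₗ[k] k := Coalgebra.counit

/-- Multiplication of the tensorands in slots `i` and `i+1` (`1 ≤ i ≤ n`);
junk (zero map) for other `i`. -/
def mulP : (n : ℕ) → (i : ℕ) → ((Pk k A (n+1) : Type) →ₗ[k] Pk k A n)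
  | 0, _ => 0
  | n + 1, i =>
      if i = n + 1 then
        (TensorProduct.map (LinearMap.id : (Pk k A n : Type) →ₗ[k] Pk k A n) (μA k A)).comp
          (TensorProduct.assoc k (Pk k A n) A A).toLinearMap
      else
        TensorProduct.map (mulP n i) (LinearMap.id : A →ₗ[k] A)

/-- Insert an `A`-factor at the innermost slot (slot 1). -/
def insP : (n : ℕ) → (A ⊗[k] (Pk k A n : Type)) ≃ₗ[k] (Pk k A (n+1) : Type)
  | 0 => TensorProduct.comm k A k
  | n + 1 =>
      (TensorProduct.assoc k A (Pk k A n) A).symm.trans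
        (TensorProduct.congr (insP n) (LinearEquiv.refl k A))

section NM

variable {N : Type} [AddCommGroup N] [Module k N]

/-- The left diagonal action of `A` on `N ⊗ A^{⊗ p}` built from a base action `ωN`. -/
def ldiag (ωN : A ⊗[k] N →ₗ[k] N) :
    (p : ℕ) → (A ⊗[k] (pwr k A (ModuleCat.of k N) p : Type) →ₗ[k] pwr k A (ModuleCat.of k N) p)
  | 0 => ωN
  | p + 1 =>
      (TensorProduct.map (ldiag ωN p) (μA k A)).comp <|
        ((TensorProduct.tensorTensorTensorComm k A A
            (pwr k A (ModuleCat.of k N) p : Type) A).toLinearMap).comp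
          (TensorProduct.map (ΔA k A) (LinearMap.id :
            ((pwr k A (ModuleCat.of k N) p : Type) ⊗[k] A) →ₗ[k] _))

/-- Right diagonal multiplication on the `A`-slots of `N ⊗ A^{⊗ p}` (counit on the base). -/
def rdiagE : (p : ℕ) →
    ((pwr k A (ModuleCat.of k N) p : Type) ⊗[k] A →ₗ[k] pwr k A (ModuleCat.of k N) p)
  | 0 => (TensorProduct.rid k N).toLinearMap.comp
      (TensorProduct.map (LinearMap.id : N →ₗ[k] N) (εA k A))
  | p + 1 =>
      (TensorProduct.map (rdiagE p) (μA k A)).comp <|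
        ((TensorProduct.tensorTensorTensorComm k
            (pwr k A (ModuleCat.of k N) p : Type) A A A).toLinearMap).comp
          (TensorProduct.map
            (LinearMap.id : ((pwr k A (ModuleCat.of k N) p : Type) ⊗[k] A) →ₗ[k] _) (ΔA k A))

/-- Right diagonal action on `N ⊗ A^{⊗ p}` built from a base (right) action `ωNr`. -/
def rdiagAct (ωNr : N ⊗[k] A →ₗ[k] N) : (p : ℕ) →
    ((pwr k A (ModuleCat.of k N) p : Type) ⊗[k] A →ₗ[k] pwr k A (ModuleCat.of k N) p)
  | 0 => ωNr
  | p + 1 =>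
      (TensorProduct.map (rdiagAct ωNr p) (μA k A)).comp <|
        ((TensorProduct.tensorTensorTensorComm k
            (pwr k A (ModuleCat.of k N) p : Type) A A A).toLinearMap).comp
          (TensorProduct.map
            (LinearMap.id : ((pwr k A (ModuleCat.of k N) p : Type) ⊗[k] A) →ₗ[k] _) (ΔA k A))

end NM

/-- `dL : A^{⊗ n} → A ⊗ A^{⊗ n}`, `a^1 ⊗ ⋯ ⊗ a^n ↦ Σ (a^1)_1 ⋯ (a^n)_1 ⊗ ((a^1)_2 ⊗ ⋯ ⊗ (a^n)_2)`. -/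
def dL : (n : ℕ) → ((Pk k A n : Type) →ₗ[k] A ⊗[k] (Pk k A n : Type))
  | 0 => (TensorProduct.map (Algebra.linearMap k A) (LinearMap.id : k →ₗ[k] k)).comp
      (TensorProduct.lid k k).symm.toLinearMap
  | n + 1 =>
      (TensorProduct.map (μA k A)
          (LinearMap.id : ((Pk k A n : Type) ⊗[k] A) →ₗ[k] _)).comp <|
        ((TensorProduct.tensorTensorTensorComm k A (Pk k A n : Type) A A).toLinearMap).comp
          (TensorProduct.map (dL n) (ΔA k A))

/-- `dR : A^{⊗ n} → A^{⊗ n} ⊗ A`, `a^1 ⊗ ⋯ ⊗ a^n ↦ Σ ((a^1)_1 ⊗ ⋯ ⊗ (a^n)_1) ⊗ (a^1)_2 ⋯ (a^n)_2`. -/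
def dR : (n : ℕ) → ((Pk k A n : Type) →ₗ[k] (Pk k A n : Type) ⊗[k] A)
  | 0 => (TensorProduct.map (LinearMap.id : k →ₗ[k] k) (Algebra.linearMap k A)).comp
      (TensorProduct.rid k k).symm.toLinearMap
  | n + 1 =>
      (TensorProduct.map
          (LinearMap.id : ((Pk k A n : Type) ⊗[k] A) →ₗ[k] _) (μA k A)).comp <|
        ((TensorProduct.tensorTensorTensorComm k (Pk k A n : Type) A A A).toLinearMap).comp
          (TensorProduct.map (dR n) (ΔA k A))

section Base

variable {N : Type} [AddCommGroup N] [Module k N]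

/-- Apply `ρN : N → N ⊗ A` to the base of `N ⊗ A^{⊗ p}`. -/
def rhoBase (ρN : N →ₗ[k] N ⊗[k] A) : (p : ℕ) →
    ((pwr k A (ModuleCat.of k N) p : Type) →ₗ[k] pwr k A (ModuleCat.of k (N ⊗[k] A)) p)
  | 0 => ρN
  | p + 1 => TensorProduct.map (rhoBase ρN p) (LinearMap.id : A →ₗ[k] A)

/-- Reinterpret `(N ⊗ A) ⊗ A^{⊗ p}` as `N ⊗ A^{⊗ (p+1)}`. -/
def shiftB : (p : ℕ) →
    ((pwr k A (ModuleCat.of k (N ⊗[k] A)) p : Type) ≃ₗ[k] pwr k A (ModuleCat.of k N) (p+1))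
  | 0 => LinearEquiv.refl k (N ⊗[k] A)
  | p + 1 => TensorProduct.congr (shiftB p) (LinearEquiv.refl k A)

/-- Multiply the `A`-component of the base `N ⊗ A` on the right by an element of `A`. -/
def rmulBase : (p : ℕ) →
    ((pwr k A (ModuleCat.of k (N ⊗[k] A)) p : Type) ⊗[k] A →ₗ[k]
      pwr k A (ModuleCat.of k (N ⊗[k] A)) p)
  | 0 => (TensorProduct.map (LinearMap.id : N →ₗ[k] N) (μA k A)).comp
      (TensorProduct.assoc k N A A).toLinearMap
  | p + 1 =>
      (TensorProduct.map (rmulBase p) (LinearMap.id : A →ₗ[k] A)).comp <|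
        ((TensorProduct.assoc k (pwr k A (ModuleCat.of k (N ⊗[k] A)) p : Type) A A).symm.toLinearMap).comp <|
          (TensorProduct.map
            (LinearMap.id : (pwr k A (ModuleCat.of k (N ⊗[k] A)) p : Type) →ₗ[k] _)
            (TensorProduct.comm k A A).toLinearMap).comp
            (TensorProduct.assoc k
              (pwr k A (ModuleCat.of k (N ⊗[k] A)) p : Type) A A).toLinearMap

/-- Apply the counit to the `A`-component of the base `N ⊗ A`. -/
def epsBase : (p : ℕ) →
    ((pwr k A (ModuleCat.of k (N ⊗[k] A)) p : Type) →ₗ[k] pwr k A (ModuleCat.of k N) p)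
  | 0 => (TensorProduct.rid k N).toLinearMap.comp
      (TensorProduct.map (LinearMap.id : N →ₗ[k] N) (εA k A))
  | p + 1 => TensorProduct.map (epsBase p) (LinearMap.id : A →ₗ[k] A)

/-- Apply `Δ` on the `i`-th `A`-slot (`1 ≤ i ≤ p`) of `N ⊗ A^{⊗ p}`; junk otherwise. -/
def comulAt : (p : ℕ) → (i : ℕ) →
    ((pwr k A (ModuleCat.of k N) p : Type) →ₗ[k] pwr k A (ModuleCat.of k N) (p+1))
  | 0, _ => 0
  | p + 1, i =>
      if i = p + 1 then
        ((TensorProduct.assoc k (pwr k A (ModuleCat.of k N) p : Type) A A).symm.toLinearMap).comp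
          (TensorProduct.map
            (LinearMap.id : (pwr k A (ModuleCat.of k N) p : Type) →ₗ[k] _) (ΔA k A))
      else
        TensorProduct.map (comulAt p i) (LinearMap.id : A →ₗ[k] A)

/-- Left coaction on `N ⊗ A^{⊗ p}` coming from a left coaction on the base. -/
def lcoBase (ρNl : N →ₗ[k] A ⊗[k] N) : (p : ℕ) →
    ((pwr k A (ModuleCat.of k N) p : Type) →ₗ[k]
      A ⊗[k] (pwr k A (ModuleCat.of k N) p : Type))
  | 0 => ρNl
  | p + 1 =>
      ((TensorProduct.assoc k A (pwr k A (ModuleCat.of k N) p : Type) A).toLinearMap).comp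
        (TensorProduct.map (lcoBase ρNl p) (LinearMap.id : A →ₗ[k] A))

end Base

section Bicomplex

variable {M N : Type} [AddCommGroup M] [Module k M] [AddCommGroup N] [Module k N]

/-- `A^{⊗ n} ⊗ M`, the domain of the `(n,p)` cochains. -/
abbrev Dm (M : Type) [AddCommGroup M] [Module k M] (n : ℕ) : Type :=
  (Pk k A n : Type) ⊗[k] M

/-- `N ⊗ A^{⊗ p}`. -/
abbrev Cd (N : Type) [AddCommGroup N] [Module k N] (p : ℕ) : Type :=
  (pwr k A (ModuleCat.of k N) p : Type)

/-- The space of `(n,p)` cochains `Hom(A^{⊗ n} ⊗ M, N ⊗ A^{⊗ p})`. -/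
abbrev Yc (M N : Type) [AddCommGroup M] [Module k M] [AddCommGroup N] [Module k N]
    (n p : ℕ) : Type := Dm k A M n →ₗ[k] Cd k A N p

variable (ωM : A ⊗[k] M →ₗ[k] M) (ρM : M →ₗ[k] M ⊗[k] A)
variable (ωN : A ⊗[k] N →ₗ[k] N) (ρN : N →ₗ[k] N ⊗[k] A)

/-- `b_0`: the face using the diagonal left action of `a^1` on `N ⊗ A^{⊗ p}`. -/
def face0 (n p : ℕ) (f : Yc k A M N n p) : Yc k A M N (n+1) p :=
  (ldiag k A ωN p).comp <|
    (TensorProduct.map (LinearMap.id : A →ₗ[k] A) f).comp <|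
      ((TensorProduct.assoc k A (Pk k A n : Type) M).toLinearMap).comp
        (TensorProduct.map (insP k A n).symm.toLinearMap (LinearMap.id : M →ₗ[k] M))

/-- `b_i`, `1 ≤ i ≤ n`: multiply the adjacent arguments `a^i a^{i+1}`. -/
def faceMid (n p : ℕ) (i : ℕ) (f : Yc k A M N n p) : Yc k A M N (n+1) p :=
  f.comp (TensorProduct.map (mulP k A n i) (LinearMap.id : M →ₗ[k] M))

/-- `b_{n+1}` in the Hopf-module case: `f(a^1 ⊗ ⋯ ⊗ a^n ⊗ a^{n+1}·m)`. -/
def faceLastH (n p : ℕ) (f : Yc k A M N n p) : Yc k A M N (n+1) p :=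
  f.comp <|
    (TensorProduct.map (LinearMap.id : (Pk k A n : Type) →ₗ[k] _) ωM).comp
      (TensorProduct.assoc k (Pk k A n : Type) A M).toLinearMap

/-- `b_{n+1}` in the Yetter-Drinfel'd case. -/
def faceLastYD (n p : ℕ) (f : Yc k A M N n p) : Yc k A M N (n+1) p :=
  (rdiagE k A p).comp <|
    ((TensorProduct.comm k A (Cd k A N p)).toLinearMap).comp <|
      (TensorProduct.map (LinearMap.id : A →ₗ[k] A)
        (f.comp (TensorProduct.map (LinearMap.id : (Pk k A n : Type) →ₗ[k] _) ωM))).comp <|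
        ((TensorProduct.leftComm k (Pk k A n : Type) A (A ⊗[k] M)).toLinearMap).comp <|
          (TensorProduct.map (LinearMap.id : (Pk k A n : Type) →ₗ[k] _)
            (TensorProduct.assoc k A A M).toLinearMap).comp <|
            ((TensorProduct.assoc k (Pk k A n : Type) (A ⊗[k] A) M).toLinearMap).comp
              (TensorProduct.map
                (TensorProduct.map (LinearMap.id : (Pk k A n : Type) →ₗ[k] _) (ΔA k A))
                (LinearMap.id : M →ₗ[k] M))

/-- The Yetter-Drinfel'd horizontal faces `b_i^{n,p}`, `0 ≤ i ≤ n+1`. -/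
def bYD (n p : ℕ) (i : ℕ) (f : Yc k A M N n p) : Yc k A M N (n+1) p :=
  if i = 0 then face0 k A ωN n p f
  else if i ≤ n then faceMid k A n p i f
  else faceLastYD k A ωM n p f

/-- The Hopf-module horizontal faces `b_i^{n,p}`, `0 ≤ i ≤ n+1`. -/
def bH (n p : ℕ) (i : ℕ) (f : Yc k A M N n p) : Yc k A M N (n+1) p :=
  if i = 0 then face0 k A ωN n p f
  else if i ≤ n then faceMid k A n p i f
  else faceLastH k A ωM n p f

/-- `c_0` in the Hopf-module case: apply `ρ_N` to the `N`-component of the output. -/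
def cof0H (n p : ℕ) (f : Yc k A M N n p) : Yc k A M N n (p+1) :=
  ((shiftB k A p).toLinearMap).comp ((rhoBase k A ρN p).comp f)

/-- `c_0` in the Yetter-Drinfel'd case. -/
def cof0YD (n p : ℕ) (f : Yc k A M N n p) : Yc k A M N n (p+1) :=
  ((shiftB k A p).toLinearMap).comp <|
    (rmulBase k A p).comp <|
      ((TensorProduct.comm k A
          (pwr k A (ModuleCat.of k (N ⊗[k] A)) p : Type)).toLinearMap).comp <|
        (TensorProduct.map (LinearMap.id : A →ₗ[k] A) ((rhoBase k A ρN p).comp f)).comp <|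
          ((TensorProduct.assoc k A (Pk k A n : Type) M).toLinearMap).comp
            (TensorProduct.map (dL k A n) (LinearMap.id : M →ₗ[k] M))

/-- `c_{p+1}`: uses the right comodule structure of `M`. -/
def cofLast (n p : ℕ) (f : Yc k A M N n p) : Yc k A M N n (p+1) :=
  (TensorProduct.map f (μA k A)).comp <|
    ((TensorProduct.tensorTensorTensorComm k (Pk k A n : Type) A M A).toLinearMap).comp
      (TensorProduct.map (dR k A n) ρM)

/-- The Yetter-Drinfel'd vertical cofaces `c_j^{n,p}`, `0 ≤ j ≤ p+1`. -/
def cYD (n p : ℕ) (j : ℕ) (f : Yc k A M N n p) : Yc k A M N n (p+1) :=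
  if j = 0 then cof0YD k A ρN n p f
  else if j ≤ p then (comulAt k A p j).comp f
  else cofLast k A ρM n p f

/-- The Hopf-module vertical cofaces `c_j^{n,p}`, `0 ≤ j ≤ p+1`. -/
def cH (n p : ℕ) (j : ℕ) (f : Yc k A M N n p) : Yc k A M N n (p+1) :=
  if j = 0 then cof0H k A ρN n p f
  else if j ≤ p then (comulAt k A p j).comp f
  else cofLast k A ρM n p f

/-- The horizontal differential (Yetter-Drinfel'd case). -/
def dmYD (n p : ℕ) (f : Yc k A M N n p) : Yc k A M N (n+1) p :=
  ∑ i ∈ Finset.range (n+2), ((-1 : ℤ)^i) • bYD k A ωM ωN n p i f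

/-- The vertical differential (Yetter-Drinfel'd case). -/
def dcYD (n p : ℕ) (f : Yc k A M N n p) : Yc k A M N n (p+1) :=
  ∑ j ∈ Finset.range (p+2), ((-1 : ℤ)^j) • cYD k A ρM ρN n p j f

/-- The horizontal differential (Hopf-module case). -/
def dmH (n p : ℕ) (f : Yc k A M N n p) : Yc k A M N (n+1) p :=
  ∑ i ∈ Finset.range (n+2), ((-1 : ℤ)^i) • bH k A ωM ωN n p i f

/-- The vertical differential (Hopf-module case). -/
def dcH (n p : ℕ) (f : Yc k A M N n p) : Yc k A M N n (p+1) :=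
  ∑ j ∈ Finset.range (p+2), ((-1 : ℤ)^j) • cH k A ρM ρN n p j f

end Bicomplex

section Structures

variable {M : Type} [AddCommGroup M] [Module k M]

/-- `(M, ωM)` is a left `A`-module. -/
def IsModule (ωM : A ⊗[k] M →ₗ[k] M) : Prop :=
  (∀ m : M, ωM ((1 : A) ⊗ₜ m) = m) ∧
  ∀ (a b : A) (m : M), ωM (a ⊗ₜ ωM (b ⊗ₜ m)) = ωM ((a * b) ⊗ₜ m)

/-- `(M, ρM)` is a right `A`-comodule. -/
def IsComodule (ρM : M →ₗ[k] M ⊗[k] A) : Prop :=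
  ((TensorProduct.rid k M).toLinearMap.comp
      ((TensorProduct.map (LinearMap.id : M →ₗ[k] M) (εA k A)).comp ρM) = LinearMap.id) ∧
  (TensorProduct.map ρM (LinearMap.id : A →ₗ[k] A)).comp ρM =
    ((TensorProduct.assoc k M A A).symm.toLinearMap).comp
      ((TensorProduct.map (LinearMap.id : M →ₗ[k] M) (ΔA k A)).comp ρM)

/-- The map `a ⊗ m ↦ Σ a_1·m_0 ⊗ a_2 m_1`. -/
def hopfRHS (ωM : A ⊗[k] M →ₗ[k] M) (ρM : M →ₗ[k] M ⊗[k] A) :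
    A ⊗[k] M →ₗ[k] M ⊗[k] A :=
  (TensorProduct.map ωM (μA k A)).comp <|
    ((TensorProduct.tensorTensorTensorComm k A A M A).toLinearMap).comp
      (TensorProduct.map (ΔA k A) ρM)

/-- The map `a ⊗ m ↦ Σ (a_2·m)_0 ⊗ (a_2·m)_1 a_1`. -/
def ydLHS (ωM : A ⊗[k] M →ₗ[k] M) (ρM : M →ₗ[k] M ⊗[k] A) :
    A ⊗[k] M →ₗ[k] M ⊗[k] A :=
  (TensorProduct.map (LinearMap.id : M →ₗ[k] M) (μA k A)).comp <|
    ((TensorProduct.assoc k M A A).toLinearMap).comp <|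
      ((TensorProduct.comm k A (M ⊗[k] A)).toLinearMap).comp <|
        (TensorProduct.map (LinearMap.id : A →ₗ[k] A) (ρM.comp ωM)).comp <|
          ((TensorProduct.assoc k A A M).toLinearMap).comp
            (TensorProduct.map (ΔA k A) (LinearMap.id : M →ₗ[k] M))

/-- `(M, ωM, ρM)` is a left-right Yetter-Drinfel'd module over `A`. -/
def IsYetterDrinfeld (ωM : A ⊗[k] M →ₗ[k] M) (ρM : M →ₗ[k] M ⊗[k] A) : Prop :=
  IsModule k A ωM ∧ IsComodule k A ρM ∧
    ydLHS k A ωM ρM = hopfRHS k A ωM ρM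

/-- `(M, ωM, ρM)` is a left-right Hopf module over `A`. -/
def IsHopfModule (ωM : A ⊗[k] M →ₗ[k] M) (ρM : M →ₗ[k] M ⊗[k] A) : Prop :=
  IsModule k A ωM ∧ IsComodule k A ρM ∧
    ρM.comp ωM = hopfRHS k A ωM ρM

end Structures


theorem pwr_ind {K : Type} [Field K] {R : Type} [Ring R] [Bialgebra K R] {B : ModuleCat K}
    {n : ℕ} {motive : (pwr K R B (n+1) : Type) → Prop} (x : (pwr K R B (n+1) : Type))
    (zero : motive 0) (tmul : ∀ (y : (pwr K R B n : Type)) (a : R), motive (y ⊗ₜ a))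
    (add : ∀ x y, motive x → motive y → motive (x + y)) : motive x :=
  TensorProduct.induction_on (M := (pwr K R B n : Type)) (N := R) x zero tmul add

@[simp]
theorem pwr_zero_eq {K : Type} [Field K] {R : Type} [Ring R] [Bialgebra K R] {B : ModuleCat K}
    {n : ℕ} : (0 : (pwr K R B n : Type) ⊗[K] R) = (0 : (pwr K R B (n+1) : Type)) := rfl

theorem pwr_map_add {K : Type} [Field K] {R : Type} [Ring R] [Bialgebra K R] {B : ModuleCat K}
    {n : ℕ} {Y : Type} [AddCommMonoid Y] [Module K Y] (f : (pwr K R B (n+1) : Type) →ₗ[K] Y)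
    (x y : (pwr K R B n : Type) ⊗[K] R) : f (x + y) = f x + f y := map_add f x y

theorem pwr_add_tmul {K : Type} [Field K] {R : Type} [Ring R] [Bialgebra K R] {B : ModuleCat K}
    {n : ℕ} {Y : Type} [AddCommMonoid Y] [Module K Y] (x y : (pwr K R B n : Type) ⊗[K] R) (m : Y) :
    TensorProduct.tmul K (M := (pwr K R B (n+1) : Type)) (x + y) m =
      TensorProduct.tmul K (M := (pwr K R B (n+1) : Type)) x m +
        TensorProduct.tmul K (M := (pwr K R B (n+1) : Type)) y m := add_tmul _ _ _

section Aux

lemma mulP_ne (n i : ℕ) (h : i ≠ n + 1) :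
    mulP k A (n+1) i = TensorProduct.map (mulP k A n i) (LinearMap.id : A →ₗ[k] A) := by
  conv_lhs => unfold mulP
  exact if_neg h

lemma mulP_last (n : ℕ) :
    mulP k A (n+1) (n+1) =
      (TensorProduct.map (LinearMap.id : (Pk k A n : Type) →ₗ[k] Pk k A n) (μA k A)).comp
        (TensorProduct.assoc k (Pk k A n) A A).toLinearMap := by
  conv_lhs => unfold mulP
  exact if_pos rfl

lemma mulP_last_tmul (n : ℕ) (x : (Pk k A n : Type)) (a b : A) :
    mulP k A (n+1) (n+1) ((x ⊗ₜ a) ⊗ₜ b) = x ⊗ₜ (a * b) := by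
  rw [mulP_last]; rfl

lemma mulP_ne_tmul (n i : ℕ) (h : i ≠ n + 1) (x : (Pk k A (n+1) : Type)) (a : A) :
    mulP k A (n+1) i (x ⊗ₜ a) = mulP k A n i x ⊗ₜ a := by
  rw [mulP_ne k A n i h]; rfl

lemma insP_succ_tmul (n : ℕ) (a b : A) (x : (Pk k A n : Type)) :
    insP k A (n+1) (a ⊗ₜ (x ⊗ₜ b)) = insP k A n (a ⊗ₜ x) ⊗ₜ b := by
  show (TensorProduct.congr (insP k A n) (LinearEquiv.refl k A))
      ((TensorProduct.assoc k A (↑(Pk k A n)) A).symm (a ⊗ₜ[k] (x ⊗ₜ[k] b))) = _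
  rfl

lemma insP_zero_tmul (a : A) (c : (Pk k A 0 : Type)) :
    insP k A 0 (a ⊗ₜ c) = c ⊗ₜ a := rfl

/-- Multiplying the inserted slot 1 with the (old) slot 1. -/
lemma mulP_one_insP (n : ℕ) (a b : A) (x : (Pk k A n : Type)) :
    mulP k A (n+1) 1 (insP k A (n+1) (a ⊗ₜ insP k A n (b ⊗ₜ x))) =
      insP k A n ((a * b) ⊗ₜ x) := by
  induction n with
  | zero =>
      simp only [insP_zero_tmul, insP_succ_tmul]
      exact mulP_last_tmul k A 0 x a b
  | succ n ih =>
      induction x using pwr_ind with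
      | zero => simp
      | add y z hy hz =>
          simp only [tmul_add, map_add] at hy hz ⊢
          rw [hy, hz]
      | tmul y c =>
          rw [insP_succ_tmul, insP_succ_tmul, insP_succ_tmul,
            mulP_ne_tmul k A (n+1) 1 (by omega), ih]

/-- `L5`: inserting at slot 1 shifts `mulP` by one. -/
lemma mulP_insP (n i : ℕ) (h1 : 1 ≤ i) (h2 : i ≤ n) (a : A) (X : (Pk k A (n+1) : Type)) :
    mulP k A (n+1) (i+1) (insP k A (n+1) (a ⊗ₜ X)) =
      insP k A n (a ⊗ₜ mulP k A n i X) := by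
  induction n generalizing i with
  | zero => omega
  | succ n ih =>
      induction X using pwr_ind with
      | zero => simp
      | add y z hy hz =>
          simp only [tmul_add, map_add] at hy hz ⊢
          rw [hy, hz]
      | tmul Y b =>
          rw [insP_succ_tmul]
          rcases Nat.lt_or_ge i (n+1) with hi | hi
          · have hii : i ≤ n := by omega
            rw [mulP_ne_tmul k A (n+1) (i+1) (by omega), ih i h1 hii,
              mulP_ne_tmul k A n i (by omega), insP_succ_tmul]
          · have hii : i = n + 1 := by omega
            subst hii
            induction Y using pwr_ind with
            | zero => simp
            | add y z hy hz =>
                simp only [tmul_add, add_tmul, map_add, pwr_map_add, pwr_add_tmul] at hy hz ⊢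
                rw [hy, hz]
            | tmul y c =>
                rw [insP_succ_tmul, mulP_last_tmul, mulP_last_tmul, insP_succ_tmul]

/-- `M1`: commutation of the multiplication faces. -/
lemma mulP_mulP (n i j : ℕ) (h1 : 1 ≤ i) (h2 : i ≤ j) (h3 : j ≤ n)
    (X : (Pk k A (n+2) : Type)) :
    mulP k A n j (mulP k A (n+1) i X) = mulP k A n i (mulP k A (n+1) (j+1) X) := by
  induction n generalizing i j with
  | zero => omega
  | succ n ih =>
      induction X using pwr_ind with
      | zero => simp
      | add y z hy hz => simp only [map_add] at hy hz ⊢; rw [hy, hz]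
      | tmul W c =>
          rcases Nat.lt_or_ge j (n+1) with hj | hj
          · -- j ≤ n
            have hjn : j ≤ n := by omega
            rw [mulP_ne_tmul k A (n+1) i (by omega),
              mulP_ne_tmul k A n j (by omega),
              mulP_ne_tmul k A (n+1) (j+1) (by omega),
              mulP_ne_tmul k A n i (by omega),
              ih i j h1 h2 hjn]
          · have hjj : j = n + 1 := by omega
            subst hjj
            rcases Nat.lt_or_ge i (n+2) with hi | hi
            · -- i ≤ n+1, j = n+1
              induction W using pwr_ind with
              | zero => simp
              | add y z hy hz =>
                  simp only [map_add, add_tmul, tmul_add, pwr_map_add, pwr_add_tmul] at hy hz ⊢; rw [hy, hz]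
              | tmul V b =>
                  rw [mulP_ne_tmul k A (n+1) i (by omega) (V ⊗ₜ b), mulP_last_tmul]
                  rcases Nat.lt_or_ge i (n+1) with hii | hii
                  · rw [mulP_ne_tmul k A n i (by omega),
                      mulP_ne_tmul k A n i (by omega), mulP_last_tmul]
                  · have : i = n + 1 := by omega
                    subst this
                    induction V using pwr_ind with
                    | zero => simp
                    | add y z hy hz =>
                        simp only [map_add, add_tmul, tmul_add, pwr_map_add, pwr_add_tmul] at hy hz ⊢; rw [hy, hz]
                    | tmul y d =>
                        simp only [mulP_last_tmul, mul_assoc]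
                        rfl
            · omega

end Aux
section Aux2

variable {N : Type} [AddCommGroup N] [Module k N]

/-- The `(p+1)`-st left diagonal action with the comultiplication abstracted. -/
def LLm (ωN : A ⊗[k] N →ₗ[k] N) (p : ℕ) :
    (A ⊗[k] A) ⊗[k] (pwr k A (ModuleCat.of k N) (p+1) : Type) →ₗ[k]
      (pwr k A (ModuleCat.of k N) (p+1) : Type) :=
  (TensorProduct.map (ldiag k A ωN p) (μA k A)).comp
    (TensorProduct.tensorTensorTensorComm k A A
      (pwr k A (ModuleCat.of k N) p : Type) A).toLinearMap

/-- The `(p+1)`-st right diagonal multiplication with the comultiplication abstracted. -/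
def RRm (p : ℕ) :
    (pwr k A (ModuleCat.of k N) (p+1) : Type) ⊗[k] (A ⊗[k] A) →ₗ[k]
      (pwr k A (ModuleCat.of k N) (p+1) : Type) :=
  (TensorProduct.map (rdiagE k A p) (μA k A)).comp
    (TensorProduct.tensorTensorTensorComm k
      (pwr k A (ModuleCat.of k N) p : Type) A A A).toLinearMap

lemma LLm_tmul (ωN : A ⊗[k] N →ₗ[k] N) (p : ℕ) (u₁ u₂ : A)
    (y : (pwr k A (ModuleCat.of k N) p : Type)) (c : A) :
    LLm k A ωN p ((u₁ ⊗ₜ u₂) ⊗ₜ (y ⊗ₜ c)) = ldiag k A ωN p (u₁ ⊗ₜ y) ⊗ₜ (u₂ * c) := rfl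

lemma RRm_tmul (p : ℕ) (u₁ u₂ : A)
    (y : (pwr k A (ModuleCat.of k N) p : Type)) (c : A) :
    RRm k A (N := N) p ((y ⊗ₜ c) ⊗ₜ (u₁ ⊗ₜ u₂)) = rdiagE k A p (y ⊗ₜ u₁) ⊗ₜ (c * u₂) := rfl

lemma ldiag_zero_tmul (ωN : A ⊗[k] N →ₗ[k] N) (a : A) (z : (pwr k A (ModuleCat.of k N) 0 : Type)) :
    ldiag k A ωN 0 (a ⊗ₜ z) = ωN (a ⊗ₜ z) := rfl

lemma rdiagE_zero_tmul (z : (pwr k A (ModuleCat.of k N) 0 : Type)) (a : A) :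
    rdiagE k A 0 (z ⊗ₜ a) = εA k A a • z := rfl

lemma ldiag_succ_tmul (ωN : A ⊗[k] N →ₗ[k] N) (p : ℕ) (a : A)
    (z : (pwr k A (ModuleCat.of k N) (p+1) : Type)) :
    ldiag k A ωN (p+1) (a ⊗ₜ z) = LLm k A ωN p (ΔA k A a ⊗ₜ z) := rfl

lemma rdiagE_succ_tmul (p : ℕ)
    (z : (pwr k A (ModuleCat.of k N) (p+1) : Type)) (a : A) :
    rdiagE k A (p+1) (z ⊗ₜ a) = RRm k A p (z ⊗ₜ ΔA k A a) := rfl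

end Aux2
section Aux3

variable {N : Type} [AddCommGroup N] [Module k N]

lemma ldiag_mul (ωN : A ⊗[k] N →ₗ[k] N) (hN : IsModule k A ωN) (p : ℕ) :
    ∀ (a b : A) (z : (pwr k A (ModuleCat.of k N) p : Type)),
    ldiag k A ωN p ((a * b) ⊗ₜ z) = ldiag k A ωN p (a ⊗ₜ ldiag k A ωN p (b ⊗ₜ z)) := by
  induction p with
  | zero => exact fun a b z => (hN.2 a b z).symm
  | succ p ih =>
      intro a b z
      have key : ∀ (u v : A ⊗[k] A) (w : (pwr k A (ModuleCat.of k N) (p+1) : Type)),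
          LLm k A ωN p ((u * v) ⊗ₜ w) = LLm k A ωN p (u ⊗ₜ LLm k A ωN p (v ⊗ₜ w)) := by
        intro u v w
        induction w using pwr_ind with
        | zero => simp
        | add w₁ w₂ h₁ h₂ => simp only [tmul_add, map_add] at h₁ h₂ ⊢; rw [h₁, h₂]
        | tmul y c =>
            obtain ⟨w, hw⟩ : ∃ w : (pwr k A (ModuleCat.of k N) (p+1) : Type), w = y ⊗ₜ c :=
              ⟨_, rfl⟩
            rw [← hw]
            induction u using TensorProduct.induction_on with
            | zero => simp
            | add u₁ u₂ h₁ h₂ =>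
                simp only [add_mul, add_tmul, map_add] at h₁ h₂ ⊢; rw [h₁, h₂]
            | tmul u₁ u₂ =>
                induction v using TensorProduct.induction_on with
                | zero => simp
                | add v₁ v₂ h₁ h₂ =>
                    simp only [mul_add, add_tmul, tmul_add, map_add] at h₁ h₂ ⊢
                    rw [h₁, h₂]
                | tmul v₁ v₂ =>
                    subst hw
                    rw [Algebra.TensorProduct.tmul_mul_tmul, LLm_tmul, LLm_tmul,
                      LLm_tmul, ih, mul_assoc]
      rw [ldiag_succ_tmul, ldiag_succ_tmul, ldiag_succ_tmul]
      have hΔ : ΔA k A (a * b) = ΔA k A a * ΔA k A b := Bialgebra.comul_mul a b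
      rw [hΔ, key]

lemma rdiagE_mul (p : ℕ) :
    ∀ (a b : A) (z : (pwr k A (ModuleCat.of k N) p : Type)),
    rdiagE k A p (rdiagE k A p (z ⊗ₜ a) ⊗ₜ b) = rdiagE k A p (z ⊗ₜ (a * b)) := by
  induction p with
  | zero =>
      intro a b z
      simp only [rdiagE_zero_tmul, smul_tmul', map_smul, smul_smul]
      have hε : εA k A (a * b) = εA k A a * εA k A b := Bialgebra.counit_mul a b
      rw [hε, mul_comm]
  | succ p ih =>
      intro a b z
      have key : ∀ (u v : A ⊗[k] A) (w : (pwr k A (ModuleCat.of k N) (p+1) : Type)),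
          RRm k A p (RRm k A p (w ⊗ₜ u) ⊗ₜ v) = RRm k A p (w ⊗ₜ (u * v)) := by
        intro u v w
        induction w using pwr_ind with
        | zero => simp
        | add w₁ w₂ h₁ h₂ => simp only [add_tmul, map_add] at h₁ h₂ ⊢; rw [h₁, h₂]
        | tmul y c =>
            obtain ⟨w, hw⟩ : ∃ w : (pwr k A (ModuleCat.of k N) (p+1) : Type), w = y ⊗ₜ c :=
              ⟨_, rfl⟩
            rw [← hw]
            induction u using TensorProduct.induction_on with
            | zero => simp
            | add u₁ u₂ h₁ h₂ =>
                simp only [add_mul, add_tmul, tmul_add, map_add] at h₁ h₂ ⊢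
                rw [h₁, h₂]
            | tmul u₁ u₂ =>
                induction v using TensorProduct.induction_on with
                | zero => simp
                | add v₁ v₂ h₁ h₂ =>
                    simp only [mul_add, tmul_add, map_add] at h₁ h₂ ⊢; rw [h₁, h₂]
                | tmul v₁ v₂ =>
                    subst hw
                    rw [Algebra.TensorProduct.tmul_mul_tmul, RRm_tmul, RRm_tmul,
                      RRm_tmul, ih, mul_assoc]
      rw [rdiagE_succ_tmul, rdiagE_succ_tmul, rdiagE_succ_tmul]
      have hΔ : ΔA k A (a * b) = ΔA k A a * ΔA k A b := Bialgebra.comul_mul a b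
      rw [hΔ, key]

lemma ldiag_rdiagE_comm (ωN : A ⊗[k] N →ₗ[k] N) (p : ℕ) :
    ∀ (a b : A) (z : (pwr k A (ModuleCat.of k N) p : Type)),
    rdiagE k A p (ldiag k A ωN p (a ⊗ₜ z) ⊗ₜ b) =
      ldiag k A ωN p (a ⊗ₜ rdiagE k A p (z ⊗ₜ b)) := by
  induction p with
  | zero =>
      intro a b z
      rw [ldiag_zero_tmul, rdiagE_zero_tmul k A (ωN (a ⊗ₜ z)) b, rdiagE_zero_tmul, ldiag_zero_tmul]
      exact (map_smul ωN _ _).symm.trans (congrArg ωN ((TensorProduct.mk k A N a).map_smul _ z).symm)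
  | succ p ih =>
      intro a b z
      have key : ∀ (u v : A ⊗[k] A) (w : (pwr k A (ModuleCat.of k N) (p+1) : Type)),
          RRm k A p (LLm k A ωN p (u ⊗ₜ w) ⊗ₜ v) =
            LLm k A ωN p (u ⊗ₜ RRm k A p (w ⊗ₜ v)) := by
        intro u v w
        induction w using pwr_ind with
        | zero => simp
        | add w₁ w₂ h₁ h₂ =>
            simp only [add_tmul, tmul_add, map_add] at h₁ h₂ ⊢; rw [h₁, h₂]
        | tmul y c =>
            obtain ⟨w, hw⟩ : ∃ w : (pwr k A (ModuleCat.of k N) (p+1) : Type), w = y ⊗ₜ c :=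
              ⟨_, rfl⟩
            rw [← hw]
            induction u using TensorProduct.induction_on with
            | zero => simp
            | add u₁ u₂ h₁ h₂ =>
                simp only [add_tmul, tmul_add, map_add] at h₁ h₂ ⊢; rw [h₁, h₂]
            | tmul u₁ u₂ =>
                induction v using TensorProduct.induction_on with
                | zero => simp
                | add v₁ v₂ h₁ h₂ =>
                    simp only [add_tmul, tmul_add, map_add] at h₁ h₂ ⊢; rw [h₁, h₂]
                | tmul v₁ v₂ =>
                    subst hw
                    rw [LLm_tmul, RRm_tmul, RRm_tmul, LLm_tmul, ih, mul_assoc]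
      rw [ldiag_succ_tmul, rdiagE_succ_tmul, rdiagE_succ_tmul, ldiag_succ_tmul, key]

end Aux3
section Aux4

variable {M N : Type} [AddCommGroup M] [Module k M] [AddCommGroup N] [Module k N]

lemma ext_insP {n : ℕ} {C : Type} [AddCommGroup C] [Module k C]
    {g h : ((Pk k A (n+1) : Type) ⊗[k] M) →ₗ[k] C}
    (H : ∀ (a : A) (x : (Pk k A n : Type)) (m : M),
      g (insP k A n (a ⊗ₜ x) ⊗ₜ m) = h (insP k A n (a ⊗ₜ x) ⊗ₜ m)) : g = h := by
  have surj : Function.Surjective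
      (TensorProduct.map (insP k A n).toLinearMap (LinearMap.id : M →ₗ[k] M)) := by
    intro y
    exact ⟨(TensorProduct.congr (insP k A n) (LinearEquiv.refl k M)).symm y,
      (TensorProduct.congr (insP k A n) (LinearEquiv.refl k M)).apply_symm_apply y⟩
  apply (LinearMap.cancel_right surj).mp
  apply TensorProduct.ext'
  intro w m
  induction w using TensorProduct.induction_on with
  | zero => simp
  | add w₁ w₂ h₁ h₂ => simp only [add_tmul, map_add] at h₁ h₂ ⊢; rw [h₁, h₂]
  | tmul a x => simpa using H a x m

lemma face0_tmul (ωN : A ⊗[k] N →ₗ[k] N) (n p : ℕ) (f : Yc k A M N n p)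
    (a : A) (x : (Pk k A n : Type)) (m : M) :
    face0 k A ωN n p f (insP k A n (a ⊗ₜ x) ⊗ₜ m) =
      ldiag k A ωN p (a ⊗ₜ f (x ⊗ₜ m)) := by
  simp [face0]

lemma faceMid_tmul (n p i : ℕ) (f : Yc k A M N n p)
    (X : (Pk k A (n+1) : Type)) (m : M) :
    faceMid k A n p i f (X ⊗ₜ m) = f (mulP k A n i X ⊗ₜ m) := rfl

/-- `faceLastYD` with the comultiplication abstracted. -/
def FLm (ωM : A ⊗[k] M →ₗ[k] M) (n p : ℕ) (f : Yc k A M N n p) :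
    ((Pk k A n : Type) ⊗[k] (A ⊗[k] A)) ⊗[k] M →ₗ[k] Cd k A N p :=
  (rdiagE k A p).comp <|
    ((TensorProduct.comm k A (Cd k A N p)).toLinearMap).comp <|
      (TensorProduct.map (LinearMap.id : A →ₗ[k] A)
        (f.comp (TensorProduct.map (LinearMap.id : (Pk k A n : Type) →ₗ[k] _) ωM))).comp <|
        ((TensorProduct.leftComm k (Pk k A n : Type) A (A ⊗[k] M)).toLinearMap).comp <|
          (TensorProduct.map (LinearMap.id : (Pk k A n : Type) →ₗ[k] _)
            (TensorProduct.assoc k A A M).toLinearMap).comp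
            (TensorProduct.assoc k (Pk k A n : Type) (A ⊗[k] A) M).toLinearMap

lemma FLm_tmul (ωM : A ⊗[k] M →ₗ[k] M) (n p : ℕ) (f : Yc k A M N n p)
    (x : (Pk k A n : Type)) (u₁ u₂ : A) (m : M) :
    FLm k A ωM n p f ((x ⊗ₜ (u₁ ⊗ₜ u₂)) ⊗ₜ m) =
      rdiagE k A p (f (x ⊗ₜ ωM (u₂ ⊗ₜ m)) ⊗ₜ u₁) := by
  simp [FLm]

lemma faceLastYD_tmul (ωM : A ⊗[k] M →ₗ[k] M) (n p : ℕ) (f : Yc k A M N n p)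
    (x : (Pk k A n : Type)) (a : A) (m : M) :
    faceLastYD k A ωM n p f ((x ⊗ₜ a) ⊗ₜ m) =
      FLm k A ωM n p f ((x ⊗ₜ ΔA k A a) ⊗ₜ m) := rfl

end Aux4
section Aux5

variable {M N : Type} [AddCommGroup M] [Module k M] [AddCommGroup N] [Module k N]

lemma rel00 (ωN : A ⊗[k] N →ₗ[k] N) (hN : IsModule k A ωN) (n p : ℕ)
    (f : Yc k A M N n p) :
    face0 k A ωN (n+1) p (face0 k A ωN n p f) =
      faceMid k A (n+1) p 1 (face0 k A ωN n p f) := by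
  apply ext_insP k A
  intro a X m
  obtain ⟨w, rfl⟩ := (insP k A n).surjective X
  induction w using TensorProduct.induction_on with
  | zero => simp
  | add w₁ w₂ h₁ h₂ =>
      simp only [map_add, tmul_add, add_tmul] at h₁ h₂ ⊢; rw [h₁, h₂]
  | tmul b x =>
      rw [face0_tmul, face0_tmul, faceMid_tmul, mulP_one_insP, face0_tmul,
        ldiag_mul k A ωN hN]

lemma rel0mid (ωN : A ⊗[k] N →ₗ[k] N) (n p i : ℕ) (h1 : 1 ≤ i) (h2 : i ≤ n)
    (f : Yc k A M N n p) :
    face0 k A ωN (n+1) p (faceMid k A n p i f) =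
      faceMid k A (n+1) p (i+1) (face0 k A ωN n p f) := by
  apply ext_insP k A
  intro a X m
  rw [face0_tmul, faceMid_tmul, faceMid_tmul, mulP_insP k A n i h1 h2,
    face0_tmul]

lemma rel0last (ωM : A ⊗[k] M →ₗ[k] M) (ωN : A ⊗[k] N →ₗ[k] N) (n p : ℕ)
    (f : Yc k A M N n p) :
    face0 k A ωN (n+1) p (faceLastYD k A ωM n p f) =
      faceLastYD k A ωM (n+1) p (face0 k A ωN n p f) := by
  apply ext_insP k A
  intro a X m
  induction X using pwr_ind with
  | zero => simp
  | add X₁ X₂ h₁ h₂ =>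
      simp only [map_add, tmul_add, add_tmul] at h₁ h₂ ⊢; rw [h₁, h₂]
  | tmul x b =>
      rw [face0_tmul k A ωN (n+1) p _ a (x ⊗ₜ b) m, faceLastYD_tmul, insP_succ_tmul, faceLastYD_tmul]
      have key : ∀ u : A ⊗[k] A,
          FLm k A ωM (n+1) p (face0 k A ωN n p f) ((insP k A n (a ⊗ₜ x) ⊗ₜ u) ⊗ₜ m) =
            ldiag k A ωN p (a ⊗ₜ FLm k A ωM n p f ((x ⊗ₜ u) ⊗ₜ m)) := by
        intro u
        induction u using TensorProduct.induction_on with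
        | zero => simp
        | add u₁ u₂ h₁ h₂ =>
            simp only [map_add, tmul_add, add_tmul] at h₁ h₂ ⊢; rw [h₁, h₂]
        | tmul u₁ u₂ =>
            rw [FLm_tmul, FLm_tmul, face0_tmul, ldiag_rdiagE_comm k A ωN p]
      rw [key]

lemma relmidmid (n p i j : ℕ) (h1 : 1 ≤ i) (h2 : i ≤ j) (h3 : j ≤ n)
    (f : Yc k A M N n p) :
    faceMid k A (n+1) p i (faceMid k A n p j f) =
      faceMid k A (n+1) p (j+1) (faceMid k A n p i f) := by
  apply TensorProduct.ext'
  intro X m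
  rw [faceMid_tmul, faceMid_tmul, faceMid_tmul, faceMid_tmul,
    mulP_mulP k A n i j h1 h2 h3]

lemma relmidlast (ωM : A ⊗[k] M →ₗ[k] M) (n p i : ℕ) (h1 : 1 ≤ i) (h2 : i ≤ n)
    (f : Yc k A M N n p) :
    faceMid k A (n+1) p i (faceLastYD k A ωM n p f) =
      faceLastYD k A ωM (n+1) p (faceMid k A n p i f) := by
  apply TensorProduct.ext'
  intro X m
  induction X using pwr_ind with
  | zero => simp
  | add X₁ X₂ h₁ h₂ =>
      simp only [map_add, tmul_add, add_tmul] at h₁ h₂ ⊢; rw [h₁, h₂]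
  | tmul Y b =>
      rw [faceMid_tmul k A (n+1) p i _ (Y ⊗ₜ b) m, mulP_ne_tmul k A n i (by omega), faceLastYD_tmul,
        faceLastYD_tmul]
      have key : ∀ u : A ⊗[k] A,
          FLm k A ωM (n+1) p (faceMid k A n p i f) ((Y ⊗ₜ u) ⊗ₜ m) =
            FLm k A ωM n p f ((mulP k A n i Y ⊗ₜ u) ⊗ₜ m) := by
        intro u
        induction u using TensorProduct.induction_on with
        | zero => simp
        | add u₁ u₂ h₁ h₂ =>
            simp only [map_add, tmul_add, add_tmul] at h₁ h₂ ⊢; rw [h₁, h₂]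
        | tmul u₁ u₂ => rw [FLm_tmul, FLm_tmul, faceMid_tmul]
      rw [key]

lemma rellastlast (ωM : A ⊗[k] M →ₗ[k] M) (hM : IsModule k A ωM) (n p : ℕ)
    (f : Yc k A M N n p) :
    faceMid k A (n+1) p (n+1) (faceLastYD k A ωM n p f) =
      faceLastYD k A ωM (n+1) p (faceLastYD k A ωM n p f) := by
  apply TensorProduct.ext'
  intro X m
  induction X using pwr_ind with
  | zero => simp
  | add X₁ X₂ h₁ h₂ =>
      simp only [map_add, tmul_add, add_tmul] at h₁ h₂ ⊢; rw [h₁, h₂]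
  | tmul Y b =>
      induction Y using pwr_ind with
      | zero => simp
      | add Y₁ Y₂ h₁ h₂ =>
          simp only [map_add, tmul_add, add_tmul, pwr_map_add, pwr_add_tmul] at h₁ h₂ ⊢; rw [h₁, h₂]
      | tmul x a =>
          rw [faceMid_tmul k A (n+1) p (n+1) _ ((x ⊗ₜ a) ⊗ₜ b) m, mulP_last_tmul, faceLastYD_tmul,
            faceLastYD_tmul k A ωM (n+1) p _ (x ⊗ₜ a) b m]
          have key2 : ∀ (v₁ v₂ : A) (u : A ⊗[k] A),
              rdiagE k A p (FLm k A ωM n p f ((x ⊗ₜ u) ⊗ₜ ωM (v₂ ⊗ₜ m)) ⊗ₜ v₁) =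
                FLm k A ωM n p f ((x ⊗ₜ (u * (v₁ ⊗ₜ v₂))) ⊗ₜ m) := by
            intro v₁ v₂ u
            induction u using TensorProduct.induction_on with
            | zero => simp; exact map_zero _
            | add u₁ u₂ h₁ h₂ =>
                simp only [map_add, tmul_add, add_tmul, add_mul] at h₁ h₂ ⊢
                rw [h₁, h₂]
            | tmul u₁ u₂ =>
                rw [FLm_tmul, rdiagE_mul, Algebra.TensorProduct.tmul_mul_tmul,
                  FLm_tmul, hM.2]
          have key1 : ∀ v : A ⊗[k] A,
              FLm k A ωM (n+1) p (faceLastYD k A ωM n p f) (((x ⊗ₜ a) ⊗ₜ v) ⊗ₜ m) =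
                FLm k A ωM n p f ((x ⊗ₜ (ΔA k A a * v)) ⊗ₜ m) := by
            intro v
            obtain ⟨X, hX⟩ : ∃ X : (Pk k A (n+1) : Type), X = x ⊗ₜ a := ⟨_, rfl⟩
            rw [← hX]
            induction v using TensorProduct.induction_on with
            | zero => simp
            | add v₁ v₂ h₁ h₂ =>
                simp only [map_add, tmul_add, add_tmul, mul_add] at h₁ h₂ ⊢
                rw [h₁, h₂]
            | tmul v₁ v₂ =>
                subst hX
                rw [FLm_tmul k A ωM (n+1) p _ (x ⊗ₜ a) v₁ v₂ m, faceLastYD_tmul, key2]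
          rw [key1]
          have hΔ : ΔA k A (a * b) = ΔA k A a * ΔA k A b := Bialgebra.comul_mul a b
          rw [hΔ]

end Aux5
section Aux6

variable {M N : Type} [AddCommGroup M] [Module k M] [AddCommGroup N] [Module k N]

lemma bYD_zero (ωM : A ⊗[k] M →ₗ[k] M) (ωN : A ⊗[k] N →ₗ[k] N) (n p : ℕ)
    (f : Yc k A M N n p) :
    bYD k A ωM ωN n p 0 f = face0 k A ωN n p f := by
  unfold bYD; rw [if_pos rfl]

lemma bYD_mid (ωM : A ⊗[k] M →ₗ[k] M) (ωN : A ⊗[k] N →ₗ[k] N) (n p i : ℕ)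
    (h1 : 1 ≤ i) (h2 : i ≤ n) (f : Yc k A M N n p) :
    bYD k A ωM ωN n p i f = faceMid k A n p i f := by
  unfold bYD; rw [if_neg (by omega), if_pos h2]

lemma bYD_last (ωM : A ⊗[k] M →ₗ[k] M) (ωN : A ⊗[k] N →ₗ[k] N) (n p : ℕ)
    (f : Yc k A M N n p) :
    bYD k A ωM ωN n p (n+1) f = faceLastYD k A ωM n p f := by
  unfold bYD; rw [if_neg (by omega), if_neg (by omega)]

/-- The cosimplicial identity for the Yetter-Drinfel'd horizontal faces. -/
lemma bYD_rel (ωM : A ⊗[k] M →ₗ[k] M) (ωN : A ⊗[k] N →ₗ[k] N)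
    (hM : IsModule k A ωM) (hN : IsModule k A ωN) (n p i j : ℕ)
    (hij : i ≤ j) (hj : j ≤ n+1) (f : Yc k A M N n p) :
    bYD k A ωM ωN (n+1) p i (bYD k A ωM ωN n p j f) =
      bYD k A ωM ωN (n+1) p (j+1) (bYD k A ωM ωN n p i f) := by
  rcases Nat.eq_zero_or_pos i with hi0 | hi1
  · subst hi0
    rw [bYD_zero]
    rcases Nat.eq_zero_or_pos j with hj0 | hj1
    · subst hj0
      rw [bYD_zero, bYD_mid k A ωM ωN (n+1) p (0+1) (by omega) (by omega)]
      exact rel00 k A ωN hN n p f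
    · rcases Nat.lt_or_ge j (n+1) with hjn | hjn
      · rw [bYD_mid k A ωM ωN n p j hj1 (by omega), bYD_zero,
          bYD_mid k A ωM ωN (n+1) p (j+1) (by omega) (by omega)]
        exact rel0mid k A ωN n p j hj1 (by omega) f
      · have : j = n + 1 := by omega
        subst this
        rw [bYD_last, bYD_zero]
        have h2 : bYD k A ωM ωN (n+1) p (n+1+1) (face0 k A ωN n p f) =
            faceLastYD k A ωM (n+1) p (face0 k A ωN n p f) :=
          bYD_last k A ωM ωN (n+1) p _
        rw [h2]
        exact rel0last k A ωM ωN n p f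
  · rcases Nat.lt_or_ge j (n+1) with hjn | hjn
    · -- 1 ≤ i ≤ j ≤ n
      rw [bYD_mid k A ωM ωN n p j (by omega) (by omega),
        bYD_mid k A ωM ωN (n+1) p i (by omega) (by omega),
        bYD_mid k A ωM ωN n p i (by omega) (by omega),
        bYD_mid k A ωM ωN (n+1) p (j+1) (by omega) (by omega)]
      exact relmidmid k A n p i j hi1 hij (by omega) f
    · have hj' : j = n + 1 := by omega
      subst hj'
      rw [bYD_last]
      have h2 : bYD k A ωM ωN (n+1) p (n+1+1) (bYD k A ωM ωN n p i f) =
          faceLastYD k A ωM (n+1) p (bYD k A ωM ωN n p i f) :=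
        bYD_last k A ωM ωN (n+1) p _
      rw [h2]
      rcases Nat.lt_or_ge i (n+1) with hin | hin
      · rw [bYD_mid k A ωM ωN (n+1) p i (by omega) (by omega),
          bYD_mid k A ωM ωN n p i (by omega) (by omega)]
        exact relmidlast k A ωM n p i hi1 (by omega) f
      · have : i = n + 1 := by omega
        subst this
        rw [bYD_mid k A ωM ωN (n+1) p (n+1) (by omega) (by omega), bYD_last]
        exact rellastlast k A ωM hM n p f

end Aux6
section Aux7

variable {M N : Type} [AddCommGroup M] [Module k M] [AddCommGroup N] [Module k N]

lemma face0_add (ωN : A ⊗[k] N →ₗ[k] N) (n p : ℕ) (f g : Yc k A M N n p) :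
    face0 k A ωN n p (f + g) = face0 k A ωN n p f + face0 k A ωN n p g := by
  apply ext_insP k A
  intro a x m
  simp only [face0_tmul, LinearMap.add_apply, tmul_add, map_add]

lemma face0_smul (ωN : A ⊗[k] N →ₗ[k] N) (n p : ℕ) (c : k) (f : Yc k A M N n p) :
    face0 k A ωN n p (c • f) = c • face0 k A ωN n p f := by
  apply ext_insP k A
  intro a x m
  simp only [face0_tmul, LinearMap.smul_apply, tmul_smul, map_smul]

lemma faceMid_add (n p i : ℕ) (f g : Yc k A M N n p) :
    faceMid k A n p i (f + g) = faceMid k A n p i f + faceMid k A n p i g :=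
  LinearMap.add_comp _ _ _

lemma faceMid_smul (n p i : ℕ) (c : k) (f : Yc k A M N n p) :
    faceMid k A n p i (c • f) = c • faceMid k A n p i f :=
  LinearMap.smul_comp _ _ _

lemma faceLastYD_add (ωM : A ⊗[k] M →ₗ[k] M) (n p : ℕ) (f g : Yc k A M N n p) :
    faceLastYD k A ωM n p (f + g) =
      faceLastYD k A ωM n p f + faceLastYD k A ωM n p g := by
  unfold faceLastYD
  simp only [LinearMap.add_comp, LinearMap.comp_add, TensorProduct.map_add_right]

lemma faceLastYD_smul (ωM : A ⊗[k] M →ₗ[k] M) (n p : ℕ) (c : k) (f : Yc k A M N n p) :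
    faceLastYD k A ωM n p (c • f) = c • faceLastYD k A ωM n p f := by
  unfold faceLastYD
  simp only [LinearMap.smul_comp, LinearMap.comp_smul, TensorProduct.map_smul_right]

lemma bYD_add (ωM : A ⊗[k] M →ₗ[k] M) (ωN : A ⊗[k] N →ₗ[k] N) (n p i : ℕ)
    (f g : Yc k A M N n p) :
    bYD k A ωM ωN n p i (f + g) = bYD k A ωM ωN n p i f + bYD k A ωM ωN n p i g := by
  unfold bYD
  split_ifs with h1 h2
  · exact face0_add k A ωN n p f g
  · exact faceMid_add k A n p i f g
  · exact faceLastYD_add k A ωM n p f g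

lemma bYD_smul (ωM : A ⊗[k] M →ₗ[k] M) (ωN : A ⊗[k] N →ₗ[k] N) (n p i : ℕ)
    (c : k) (f : Yc k A M N n p) :
    bYD k A ωM ωN n p i (c • f) = c • bYD k A ωM ωN n p i f := by
  unfold bYD
  split_ifs with h1 h2
  · exact face0_smul k A ωN n p c f
  · exact faceMid_smul k A n p i c f
  · exact faceLastYD_smul k A ωM n p c f

lemma bYD_sum (ωM : A ⊗[k] M →ₗ[k] M) (ωN : A ⊗[k] N →ₗ[k] N) (n p i : ℕ)
    (s : Finset ℕ) (c : ℕ → k) (g : ℕ → Yc k A M N n p) :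
    bYD k A ωM ωN n p i (∑ j ∈ s, c j • g j) =
      ∑ j ∈ s, c j • bYD k A ωM ωN n p i (g j) := by
  classical
  induction s using Finset.induction_on with
  | empty =>
      simpa using bYD_smul k A ωM ωN n p i (0 : k) 0
  | insert j s hj ih =>
      rw [Finset.sum_insert hj, Finset.sum_insert hj, bYD_add, bYD_smul, ih]

lemma zsmul_to_k {V : Type} [AddCommGroup V] [Module k V] (i : ℕ) (v : V) :
    ((-1:ℤ)^i) • v = ((-1:k)^i) • v := by
  rw [← Int.cast_smul_eq_zsmul k]
  push_cast
  rfl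

lemma dmYD_eq_ksum (ωM : A ⊗[k] M →ₗ[k] M) (ωN : A ⊗[k] N →ₗ[k] N) (n p : ℕ)
    (f : Yc k A M N n p) :
    dmYD k A ωM ωN n p f =
      ∑ i ∈ Finset.range (n+2), ((-1:k)^i) • bYD k A ωM ωN n p i f := by
  unfold dmYD
  exact Finset.sum_congr rfl fun i _ => zsmul_to_k k i _

end Aux7
/-- The horizontal differential `d_m = Σ (-1)^i b_i` of the
Yetter-Drinfel'd bicomplex squares to zero. -/
theorem dmYD_dmYD (k : Type) [Field k] (A : Type) [Ring A] [Bialgebra k A]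
    (M N : Type) [AddCommGroup M] [Module k M] [AddCommGroup N] [Module k N]
    (ωM : A ⊗[k] M →ₗ[k] M) (ρM : M →ₗ[k] M ⊗[k] A)
    (ωN : A ⊗[k] N →ₗ[k] N) (ρN : N →ₗ[k] N ⊗[k] A)
    (hM : IsYetterDrinfeld k A ωM ρM) (hN : IsYetterDrinfeld k A ωN ρN)
    (n p : ℕ) (f : Yc k A M N n p) :
    dmYD k A ωM ωN (n+1) p (dmYD k A ωM ωN n p f) = 0 := by
  classical
  have hM1 : IsModule k A ωM := hM.1
  have hN1 : IsModule k A ωN := hN.1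
  rw [dmYD_eq_ksum, dmYD_eq_ksum]
  have step : ∀ i : ℕ,
      bYD k A ωM ωN (n+1) p i
        (∑ j ∈ Finset.range (n+2), ((-1:k)^j) • bYD k A ωM ωN n p j f) =
      ∑ j ∈ Finset.range (n+2),
        ((-1:k)^j) • bYD k A ωM ωN (n+1) p i (bYD k A ωM ωN n p j f) :=
    fun i => bYD_sum k A ωM ωN (n+1) p i _ _ _
  simp only [step, Finset.smul_sum, smul_smul]
  have hprod := Finset.sum_product' (s := Finset.range (n+1+2)) (t := Finset.range (n+2))
    (f := fun i j => ((-1:k)^i * (-1:k)^j) •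
      bYD k A ωM ωN (n+1) p i (bYD k A ωM ωN n p j f))
  rw [← hprod]
  set F : ℕ × ℕ → Yc k A M N (n+1+1) p := fun q =>
    ((-1:k)^q.1 * (-1:k)^q.2) • bYD k A ωM ωN (n+1) p q.1 (bYD k A ωM ωN n p q.2 f)
    with hF
  have split := Finset.sum_filter_add_sum_filter_not
    (Finset.range (n+1+2) ×ˢ Finset.range (n+2)) (fun q => q.1 ≤ q.2) F
  rw [← split]
  have hneg :
      ∑ q ∈ (Finset.range (n+1+2) ×ˢ Finset.range (n+2)).filter (fun q => ¬ q.1 ≤ q.2), F q =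
      ∑ q ∈ (Finset.range (n+1+2) ×ˢ Finset.range (n+2)).filter (fun q => q.1 ≤ q.2), -F q := by
    apply Finset.sum_nbij' (i := fun q => (q.2, q.1 - 1)) (j := fun q => (q.2 + 1, q.1))
    · intro q hq
      simp only [Finset.mem_filter, Finset.mem_product, Finset.mem_range, not_le] at hq ⊢
      omega
    · intro q hq
      simp only [Finset.mem_filter, Finset.mem_product, Finset.mem_range, not_le] at hq ⊢
      omega
    · rintro ⟨q1, q2⟩ hq
      simp only [Finset.mem_filter, Finset.mem_product, Finset.mem_range, not_le] at hq
      dsimp only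
      simp only [Prod.mk.injEq]
      refine ⟨?_, ?_⟩ <;> first | omega | trivial
    · rintro ⟨q1, q2⟩ hq
      simp only [Finset.mem_filter, Finset.mem_product, Finset.mem_range, not_le] at hq
      dsimp only
      simp only [Prod.mk.injEq]
      refine ⟨?_, ?_⟩ <;> first | omega | trivial
    · rintro ⟨i, j⟩ hq
      simp only [Finset.mem_filter, Finset.mem_product, Finset.mem_range, not_le] at hq
      dsimp only
      obtain ⟨⟨hi, hj⟩, hji⟩ := hq
      have hrel := bYD_rel k A ωM ωN hM1 hN1 n p j (i-1) (by omega) (by omega) f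
      have hi1 : i - 1 + 1 = i := by omega
      rw [hi1] at hrel
      simp only [hF]
      try dsimp only
      have hcoef : ((-1:k)^i * (-1:k)^j) = -((-1:k)^j * (-1:k)^(i-1)) := by
        have hii : i = (i-1)+1 := by omega
        conv_lhs => rw [hii]
        rw [pow_succ]
        ring
      rw [hrel, hcoef, neg_smul]
  rw [hneg, ← Finset.sum_add_distrib]
  simp

end PS
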